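/- For n ≥ 6, the complement of the cycle graph C_n is a pawful graph but is not a join of two nonempty graphs. -/

import Mathlib

/-- The cycle graph on `ZMod n`, with `i` adjacent to `i + 1`. -/
def cycleGraph (n : ℕ) : SimpleGraph (ZMod n) where
  Adj u v := u ≠ v ∧ (u - v = 1 ∨ v - u = 1)
  symm := ⟨fun u v h => ⟨h.1.symm, h.2.symm⟩⟩
  loopless := ⟨fun u h => h.1 rfl⟩

/-- A pawful graph: connected, diameter at most 2, and any "paw" configuration can be
completed. -/
def Pawful {V : Type*} (G : SimpleGraph V) : Prop :=
  G.Connected ∧ (∀ u v : V, G.dist u v ≤ 2) ∧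
    ∀ u v w : V, G.dist u v = 2 → G.dist v w = 2 → G.dist u w = 1 →
      ∃ x : V, G.dist x u = 1 ∧ G.dist x v = 1 ∧ G.dist x w = 1

lemma cg_natCast_ne_zero {n : ℕ} (hn : 6 ≤ n) {k : ℕ} (h1 : 0 < k) (h2 : k ≤ 5) :
    (k : ZMod n) ≠ 0 := by
  intro h
  rw [ZMod.natCast_eq_zero_iff] at h
  have := Nat.le_of_dvd h1 h
  omega

lemma cg_compl_adj {n : ℕ} (u v : ZMod n) :
    (cycleGraph n)ᶜ.Adj u v ↔ u ≠ v ∧ u - v ≠ 1 ∧ v - u ≠ 1 := by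
  simp only [SimpleGraph.compl_adj, cycleGraph]
  tauto

lemma cg_adj_of_sub {n : ℕ} (hn : 6 ≤ n) (u v : ZMod n) (d : ℕ) (hd1 : 2 ≤ d) (hd2 : d ≤ 4)
    (h : u - v = (d : ZMod n)) : (cycleGraph n)ᶜ.Adj u v := by
  rw [cg_compl_adj]
  have h0 : (d : ZMod n) ≠ 0 := cg_natCast_ne_zero hn (by omega) (by omega)
  have h1 : ((d - 1 : ℕ) : ZMod n) ≠ 0 := cg_natCast_ne_zero hn (by omega) (by omega)
  have h2 : ((d + 1 : ℕ) : ZMod n) ≠ 0 := cg_natCast_ne_zero hn (by omega) (by omega)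
  have e1 : ((d - 1 : ℕ) : ZMod n) = (d : ZMod n) - 1 := by
    have : (d - 1) + 1 = d := by omega
    calc ((d - 1 : ℕ) : ZMod n) = ((d - 1 : ℕ) : ZMod n) + 1 - 1 := by ring
    _ = (((d - 1) + 1 : ℕ) : ZMod n) - 1 := by push_cast; ring
    _ = (d : ZMod n) - 1 := by rw [this]
  refine ⟨?_, ?_, ?_⟩
  · intro he; rw [he, sub_self] at h; exact h0 h.symm
  · intro he; rw [he] at h; apply h1; rw [e1, ← h]; ring
  · intro he
    apply h2
    push_cast
    have : v - u = -(d : ZMod n) := by rw [← h]; ring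
    rw [this] at he
    linear_combination -he

theorem compl_cycle_pawful_not_join (n : ℕ) (hn : 6 ≤ n) :
    Pawful (cycleGraph n)ᶜ ∧
      ¬ ∃ A : Set (ZMod n), A.Nonempty ∧ Aᶜ.Nonempty ∧
        ∀ u v : ZMod n, u ∈ A → v ∈ Aᶜ → (cycleGraph n)ᶜ.Adj u v := by
  haveI : NeZero n := ⟨by omega⟩
  set G := (cycleGraph n)ᶜ with hG
  -- a walk of length ≤ 2 between any two vertices
  have hwalk : ∀ u v : ZMod n, ∃ p : G.Walk u v, p.length ≤ 2 := by
    intro u v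
    by_cases hev : u = v
    · subst hev; exact ⟨SimpleGraph.Walk.nil, by simp⟩
    by_cases ha : G.Adj u v
    · exact ⟨SimpleGraph.Walk.cons ha SimpleGraph.Walk.nil, by simp⟩
    · have hd : u - v = 1 ∨ v - u = 1 := by
        by_contra hc
        push_neg at hc
        exact ha (by rw [cg_compl_adj]; exact ⟨hev, hc.1, hc.2⟩)
      rcases hd with h1 | h1
      · -- u - v = 1, i.e. u = v + 1 ; use x = v + 3
        have a1 : G.Adj u (v + 3) := by
          apply (cg_adj_of_sub hn (v + 3) u 2 (by norm_num) (by norm_num) ?_).symm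
          have : u = v + 1 := by linear_combination h1
          rw [this]; push_cast; ring
        have a2 : G.Adj (v + 3) v := by
          apply cg_adj_of_sub hn (v + 3) v 3 (by norm_num) (by norm_num)
          push_cast; ring
        exact ⟨SimpleGraph.Walk.cons a1 (SimpleGraph.Walk.cons a2 SimpleGraph.Walk.nil), by simp⟩
      · -- v - u = 1, i.e. v = u + 1 ; use x = u + 3
        have a1 : G.Adj u (u + 3) := by
          apply (cg_adj_of_sub hn (u + 3) u 3 (by norm_num) (by norm_num) ?_).symm
          push_cast; ring
        have a2 : G.Adj (u + 3) v := by
          apply cg_adj_of_sub hn (u + 3) v 2 (by norm_num) (by norm_num)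
          have : v = u + 1 := by linear_combination h1
          rw [this]; push_cast; ring
        exact ⟨SimpleGraph.Walk.cons a1 (SimpleGraph.Walk.cons a2 SimpleGraph.Walk.nil), by simp⟩
  have hconn : G.Connected := by
    rw [SimpleGraph.connected_iff]
    exact ⟨fun u v => ⟨(hwalk u v).choose⟩, ⟨0⟩⟩
  refine ⟨⟨hconn, ?_, ?_⟩, ?_⟩
  · intro u v
    obtain ⟨p, hp⟩ := hwalk u v
    exact le_trans (SimpleGraph.dist_le p) hp
  · -- pawful condition
    intro u v w huv hvw huw
    have hAuw : G.Adj u w := SimpleGraph.dist_eq_one_iff_adj.mp huw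
    have hnuv : ¬ G.Adj u v := by
      intro h; rw [← SimpleGraph.dist_eq_one_iff_adj] at h; omega
    have hnvw : ¬ G.Adj v w := by
      intro h; rw [← SimpleGraph.dist_eq_one_iff_adj] at h; omega
    have huv' : u ≠ v := by intro h; subst h; simp [SimpleGraph.dist_self] at huv
    have hvw' : v ≠ w := by intro h; subst h; simp [SimpleGraph.dist_self] at hvw
    have h1 : u - v = 1 ∨ v - u = 1 := by
      by_contra hc
      push_neg at hc
      exact hnuv (by rw [cg_compl_adj]; exact ⟨huv', hc.1, hc.2⟩)
    have h2 : v - w = 1 ∨ w - v = 1 := by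
      by_contra hc
      push_neg at hc
      exact hnvw (by rw [cg_compl_adj]; exact ⟨hvw', hc.1, hc.2⟩)
    refine ⟨v + 3, ?_, ?_, ?_⟩ <;> rw [SimpleGraph.dist_eq_one_iff_adj]
    · -- adj (v+3) u
      rcases h1 with h | h
      · -- u = v + 1
        apply cg_adj_of_sub hn (v + 3) u 2 (by norm_num) (by norm_num)
        have : u = v + 1 := by linear_combination h
        rw [this]; push_cast; ring
      · -- u = v - 1
        apply cg_adj_of_sub hn (v + 3) u 4 (by norm_num) (by norm_num)
        have : u = v - 1 := by linear_combination -h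
        rw [this]; push_cast; ring
    · apply cg_adj_of_sub hn (v + 3) v 3 (by norm_num) (by norm_num)
      push_cast; ring
    · rcases h2 with h | h
      · -- v = w + 1, w = v - 1
        apply cg_adj_of_sub hn (v + 3) w 4 (by norm_num) (by norm_num)
        have : w = v - 1 := by linear_combination -h
        rw [this]; push_cast; ring
      · -- w = v + 1
        apply cg_adj_of_sub hn (v + 3) w 2 (by norm_num) (by norm_num)
        have : w = v + 1 := by linear_combination h
        rw [this]; push_cast; ring
  · -- not a join
    rintro ⟨A, ⟨a, ha⟩, ⟨b, hb⟩, hA⟩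
    have hstep : ∀ z : ZMod n, z ∈ A → z + 1 ∈ A := by
      intro z hz
      by_contra hz1
      have := hA z (z + 1) hz hz1
      rw [cg_compl_adj] at this
      exact this.2.2 (by ring)
    have hall : ∀ k : ℕ, a + (k : ZMod n) ∈ A := by
      intro k
      induction k with
      | zero => simpa using ha
      | succ m ih =>
        have := hstep _ ih
        have e : ((m + 1 : ℕ) : ZMod n) = (m : ZMod n) + 1 := by push_cast; ring
        rw [e, ← add_assoc]
        exact this
    have : b ∈ A := by
      have := hall (b - a).val
      rwa [ZMod.natCast_zmod_val, add_sub_cancel] at this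
    exact hb this
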